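/- arXiv:math/0509542 — 7 statements merged into one kernel-verified Lean document; each statement's English description precedes it below -/
import Mathlib

section
/- Let R be a ring and Γ a totally ordered abelian group, and let FR be an exhaustive Γ-separated filtration on R (an increasing family of additive subgroups F_γR indexed by Γ with F_γR·F_δR ⊆ F_{γ+δ}R and 1 ∈ F_0R). If the associated graded ring G_F(R) = ⊕_γ F_γR/F_{<γ}R is a domain, then R is a domain. -/
/-- `F_{<γ}R = Σ_{γ' < γ} F_{γ'}R`, the sum of the lower filtration pieces. -/
def fbelow {R : Type*} [Ring R] {Γ : Type*} [AddCommGroup Γ] [LinearOrder Γ] [IsOrderedAddMonoid Γ]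
    (F : Γ → AddSubgroup R) (γ : Γ) : AddSubgroup R :=
  ⨆ γ' ∈ Set.Iio γ, F γ'

/-- If `FR` is an exhaustive `Γ`-separated filtration on a ring `R` whose associated
graded ring `G_F(R)` is a domain (products of nonzero homogeneous symbols are nonzero),
then `R` is a domain. -/
theorem stmt0 {R : Type*} [Ring R] {Γ : Type*} [AddCommGroup Γ] [LinearOrder Γ] [IsOrderedAddMonoid Γ]
    (F : Γ → AddSubgroup R)
    (hmono : Monotone F)
    (hmul : ∀ {γ δ : Γ} {a b : R}, a ∈ F γ → b ∈ F δ → a * b ∈ F (γ + δ))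
    (hone : (1 : R) ∈ F 0)
    (hexh : ∀ a : R, ∃ γ : Γ, a ∈ F γ)
    (hsep : ∀ a : R, a ≠ 0 → ∃ γ : Γ, a ∈ F γ ∧ a ∉ fbelow F γ)
    (hdom : ∀ {γ δ : Γ} {a b : R}, a ∈ F γ → a ∉ fbelow F γ →
      b ∈ F δ → b ∉ fbelow F δ → a * b ∉ fbelow F (γ + δ)) :
    ∀ a b : R, a * b = 0 → a = 0 ∨ b = 0 := by
  intro a b hab
  by_contra h
  push_neg at h
  obtain ⟨ha, hb⟩ := h
  obtain ⟨γ, haγ, haγ'⟩ := hsep a ha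
  obtain ⟨δ, hbδ, hbδ'⟩ := hsep b hb
  exact hdom haγ haγ' hbδ hbδ' (hab ▸ (fbelow F (γ + δ)).zero_mem)
end

section
/- Let R be an Artinian ring with an exhaustive Γ-separated filtration FR (Γ a totally ordered abelian group). If the associated graded ring G_F(R) is a domain, then R is a division ring and for every nonzero homogeneous element σ(a) ∈ G_F(R)_γ there exists a homogeneous element of degree −γ which is a two-sided inverse of σ(a); in particular G_F(R) is a graded division ring. -/
lemma le_fbelow {R : Type*} [Ring R] {Γ : Type*} [AddCommGroup Γ] [LinearOrder Γ] [IsOrderedAddMonoid Γ]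
    {F : Γ → AddSubgroup R} {δ γ : Γ} (h : δ < γ) :
    F δ ≤ ⨆ γ' ∈ Set.Iio γ, F γ' :=
  le_biSup F h

/-- If `R` is Artinian with an exhaustive `Γ`-separated filtration whose associated graded
ring is a domain, then `R` is a division ring, and every nonzero homogeneous element
`σ(a) ∈ G_F(R)_γ` has a homogeneous two-sided inverse of degree `-γ` (i.e. there is
`b ∈ F_{-γ}R \ F_{<-γ}R` with `ab ≡ 1` and `ba ≡ 1` modulo `F_{<0}R`); in particular
`G_F(R)` is a graded division ring. -/
theorem stmt3 {R : Type*} [Ring R] [IsArtinian R R] {Γ : Type*} [AddCommGroup Γ] [LinearOrder Γ] [IsOrderedAddMonoid Γ]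
    (F : Γ → AddSubgroup R)
    (hmono : Monotone F)
    (hmul : ∀ {γ δ : Γ} {a b : R}, a ∈ F γ → b ∈ F δ → a * b ∈ F (γ + δ))
    (hone : (1 : R) ∈ F 0)
    (hexh : ∀ a : R, ∃ γ : Γ, a ∈ F γ)
    (hsep : ∀ a : R, a ≠ 0 → ∃ γ : Γ, a ∈ F γ ∧ a ∉ fbelow F γ)
    (hdom : ∀ {γ δ : Γ} {a b : R}, a ∈ F γ → a ∉ fbelow F γ →
      b ∈ F δ → b ∉ fbelow F δ → a * b ∉ fbelow F (γ + δ)) :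
    (∀ a : R, a ≠ 0 → ∃ b : R, a * b = 1 ∧ b * a = 1) ∧
    (∀ (γ : Γ) (a : R), a ∈ F γ → a ∉ fbelow F γ →
      ∃ b : R, b ∈ F (-γ) ∧ b ∉ fbelow F (-γ) ∧
        a * b - 1 ∈ fbelow F 0 ∧ b * a - 1 ∈ fbelow F 0) := by
  have hle : ∀ {δ γ : Γ}, δ < γ → F δ ≤ fbelow F γ := fun h => le_fbelow h
  -- no zero divisors
  have hnzd : ∀ {a b : R}, a ≠ 0 → b ≠ 0 → a * b ≠ 0 := by
    intro a b ha hb hab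
    obtain ⟨γ, haF, haN⟩ := hsep a ha
    obtain ⟨δ, hbF, hbN⟩ := hsep b hb
    exact hdom haF haN hbF hbN (hab ▸ (fbelow F (γ + δ)).zero_mem)
  -- cancellation on the right
  have hcancel : ∀ {x y a : R}, a ≠ 0 → x * a = y * a → x = y := by
    intro x y a ha h
    by_contra hxy
    have : (x - y) * a = 0 := by rw [sub_mul, h, sub_self]
    exact hnzd (sub_ne_zero.mpr hxy) ha this
  -- every nonzero element has a left inverse
  have hlinv : ∀ a : R, a ≠ 0 → ∃ b : R, b * a = 1 := by
    intro a ha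
    have hinj : Function.Injective (LinearMap.mulRight R a) := by
      intro x y h
      exact hcancel ha h
    obtain ⟨b, hb⟩ := IsArtinian.surjective_of_injective_endomorphism
      (LinearMap.mulRight R a) hinj 1
    exact ⟨b, hb⟩
  -- division ring
  have hdiv : ∀ a : R, a ≠ 0 → ∃ b : R, a * b = 1 ∧ b * a = 1 := by
    intro a ha
    obtain ⟨b, hb⟩ := hlinv a ha
    have : Nontrivial R := ⟨⟨a, 0, ha⟩⟩
    have hb0 : b ≠ 0 := by rintro rfl; simp at hb
    obtain ⟨c, hc⟩ := hlinv b hb0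
    have : c = a := by
      calc c = c * (b * a) := by rw [hb, mul_one]
      _ = (c * b) * a := by rw [mul_assoc]
      _ = a := by rw [hc, one_mul]
    exact ⟨b, by rw [← this, hc], hb⟩
  refine ⟨hdiv, ?_⟩
  -- degree of 1 is 0, i.e. 1 ∉ fbelow F 0
  intro γ a haF haN
  have ha : a ≠ 0 := by rintro rfl; exact haN (fbelow F γ).zero_mem
  have : Nontrivial R := ⟨⟨a, 0, ha⟩⟩
  obtain ⟨γ₀, h1F, h1N⟩ := hsep 1 one_ne_zero
  have hγ₀ : γ₀ = 0 := by
    rcases lt_trichotomy γ₀ 0 with h | h | h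
    · exfalso
      have h2 : (1 : R) ∈ F (γ₀ + γ₀) := by simpa using hmul h1F h1F
      have h3 : γ₀ + γ₀ < γ₀ := by simpa using add_lt_add_left h γ₀
      exact h1N (hle h3 h2)
    · exact h
    · exact absurd (hle h hone) h1N
  subst hγ₀
  obtain ⟨b, hab, hba⟩ := hdiv a ha
  have hb0 : b ≠ 0 := by rintro rfl; simp at hab
  obtain ⟨δ, hbF, hbN⟩ := hsep b hb0
  have h1' : (1 : R) ∉ fbelow F (γ + δ) := hab ▸ hdom haF haN hbF hbN
  have hδ : δ = -γ := by
    rcases lt_trichotomy (γ + δ) 0 with h | h | h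
    · exact absurd (hle h (hab ▸ hmul haF hbF)) h1N
    · exact eq_neg_of_add_eq_zero_right h
    · exact absurd (hle h hone) h1'
  subst hδ
  exact ⟨b, hbF, hbN, by rw [hab, sub_self]; exact (fbelow F 0).zero_mem,
    by rw [hba, sub_self]; exact (fbelow F 0).zero_mem⟩
end

section
/- Let R be a ring with an exhaustive Γ-separated filtration FR (Γ a totally ordered abelian group). Suppose the associated graded ring G_F(R) is a graded division ring and F_{<0}R is contained in the Jacobson radical of F_0R. Then R is a division ring. -/
/-- Let `FR` be an exhaustive `Γ`-separated filtration on `R`. If `G_F(R)` is a graded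
division ring (every nonzero homogeneous symbol `σ(a)`, `a ∈ F_γR \ F_{<γ}R`, has a
homogeneous inverse of degree `-γ`) and `F_{<0}R ⊆ J(F_0R)` (expressed by the standard
characterization of the Jacobson radical of the subring `F_0R`: for `x ∈ F_{<0}R` and
`y ∈ F_0R`, `1 - y·x` is left invertible in `F_0R`), then `R` is a division ring. -/
theorem stmt7 {R : Type*} [Ring R] [Nontrivial R] {Γ : Type*} [AddCommGroup Γ] [LinearOrder Γ] [IsOrderedAddMonoid Γ]
    (F : Γ → AddSubgroup R)
    (hmono : Monotone F)
    (hmul : ∀ {γ δ : Γ} {a b : R}, a ∈ F γ → b ∈ F δ → a * b ∈ F (γ + δ))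
    (hone : (1 : R) ∈ F 0)
    (hexh : ∀ a : R, ∃ γ : Γ, a ∈ F γ)
    (hsep : ∀ a : R, a ≠ 0 → ∃ γ : Γ, a ∈ F γ ∧ a ∉ fbelow F γ)
    (hgrdiv : ∀ (γ : Γ) (a : R), a ∈ F γ → a ∉ fbelow F γ →
      ∃ b : R, b ∈ F (-γ) ∧ a * b - 1 ∈ fbelow F 0 ∧ b * a - 1 ∈ fbelow F 0)
    (hjac : ∀ x ∈ fbelow F 0, ∀ y ∈ F 0, ∃ z ∈ F 0, z * (1 - y * x) = 1) :
    ∀ a : R, a ≠ 0 → ∃ b : R, a * b = 1 ∧ b * a = 1 := by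
  have hleft : ∀ a : R, a ≠ 0 → ∃ c : R, c * a = 1 := by
    intro a ha
    obtain ⟨γ, haγ, hna⟩ := hsep a ha
    obtain ⟨b, _, _, hba⟩ := hgrdiv γ a haγ hna
    have hx : (1 : R) - b * a ∈ fbelow F 0 := by
      have := (fbelow F 0).neg_mem hba
      simpa [neg_sub] using this
    obtain ⟨z, _, hz1⟩ := hjac (1 - b * a) hx 1 hone
    refine ⟨z * b, ?_⟩
    have : z * (b * a) = 1 := by
      have h : (1 : R) - 1 * (1 - b * a) = b * a := by rw [one_mul, sub_sub_cancel]
      rw [h] at hz1; exact hz1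
    rw [mul_assoc]; exact this
  intro a ha
  obtain ⟨c, hc⟩ := hleft a ha
  have hcne : c ≠ 0 := by
    intro h; rw [h, zero_mul] at hc; exact one_ne_zero hc.symm
  obtain ⟨d, hd⟩ := hleft c hcne
  have hda : d = a := by
    calc d = d * (c * a) := by rw [hc, mul_one]
    _ = (d * c) * a := by rw [mul_assoc]
    _ = a := by rw [hd, one_mul]
  exact ⟨c, by rw [← hda]; exact hd, hc⟩
end

section
/- Let R be a ring with an exhaustive Γ-separated filtration FR such that G_F(R) is a domain and R is a division ring. Then F_0R is a valuation ring of R: it is invariant under all inner automorphisms of R, and for every nonzero x ∈ R either x ∈ F_0R or x^{-1} ∈ F_0R. Moreover F_{<0}R is its unique maximal (two-sided) ideal. -/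
/-- If `R` is a division ring with an exhaustive `Γ`-separated filtration such that
`G_F(R)` is a domain, then `F_0R` is a (non-commutative) valuation ring of `R`: it is
invariant under inner automorphisms and for `x ≠ 0` either `x ∈ F_0R` or `x⁻¹ ∈ F_0R`;
moreover `F_{<0}R` is a proper two-sided ideal of `F_0R` whose complement in `F_0R`
consists of units of `F_0R`, i.e. it is the unique maximal ideal of `F_0R`. -/
theorem stmt8 {R : Type*} [DivisionRing R] {Γ : Type*} [AddCommGroup Γ] [LinearOrder Γ] [IsOrderedAddMonoid Γ]
    (F : Γ → AddSubgroup R)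
    (hmono : Monotone F)
    (hmul : ∀ {γ δ : Γ} {a b : R}, a ∈ F γ → b ∈ F δ → a * b ∈ F (γ + δ))
    (hone : (1 : R) ∈ F 0)
    (hexh : ∀ a : R, ∃ γ : Γ, a ∈ F γ)
    (hsep : ∀ a : R, a ≠ 0 → ∃ γ : Γ, a ∈ F γ ∧ a ∉ fbelow F γ)
    (hdom : ∀ {γ δ : Γ} {a b : R}, a ∈ F γ → a ∉ fbelow F γ →
      b ∈ F δ → b ∉ fbelow F δ → a * b ∉ fbelow F (γ + δ)) :
    (∀ u x : R, u ≠ 0 → x ∈ F 0 → u * x * u⁻¹ ∈ F 0) ∧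
    (∀ x : R, x ≠ 0 → x ∈ F 0 ∨ x⁻¹ ∈ F 0) ∧
    (fbelow F 0 ≤ F 0) ∧
    (∀ x ∈ fbelow F 0, ∀ y ∈ F 0, x * y ∈ fbelow F 0 ∧ y * x ∈ fbelow F 0) ∧
    ((1 : R) ∉ fbelow F 0) ∧
    (∀ x ∈ F 0, x ∉ fbelow F 0 → ∃ y ∈ F 0, x * y = 1 ∧ y * x = 1) := by
  -- membership in `fbelow` from a smaller level
  have mem_fb : ∀ {γ' γ : Γ} {a : R}, γ' < γ → a ∈ F γ' → a ∈ fbelow F γ := by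
    intro γ' γ a h ha
    exact (le_biSup F h : F γ' ≤ fbelow F γ) ha
  -- converse, for nonzero elements
  have fb_mem : ∀ {γ : Γ} {a : R}, a ≠ 0 → a ∈ fbelow F γ → ∃ γ' < γ, a ∈ F γ' := by
    intro γ a ha hmem
    by_cases hne : ∃ γ' : Γ, γ' < γ
    · haveI : Nonempty (Set.Iio γ) := ⟨⟨hne.choose, hne.choose_spec⟩⟩
      rw [fbelow, iSup_subtype'] at hmem
      have hdir : Directed (· ≤ ·) fun i : Set.Iio γ => F i :=
        fun i j => (le_total i.1 j.1).elim (fun h => ⟨j, hmono h, le_rfl⟩)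
          (fun h => ⟨i, le_rfl, hmono h⟩)
      obtain ⟨⟨γ', hγ'⟩, h⟩ := (AddSubgroup.mem_iSup_of_directed hdir).mp hmem
      exact ⟨γ', hγ', h⟩
    · exfalso
      apply ha
      have hbot : fbelow F γ = ⊥ :=
        le_bot_iff.mp (iSup₂_le fun γ' h' => (hne ⟨γ', h'⟩).elim)
      simpa [hbot] using hmem
  -- the "degree" is the least level: uniqueness lemma
  have degle : ∀ {γ δ : Γ} {a : R}, a ∈ F γ → a ∉ fbelow F γ → a ∈ F δ → γ ≤ δ := by
    intro γ δ a _ h2 h3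
    by_contra hlt
    push_neg at hlt
    exact h2 (mem_fb hlt h3)
  -- degree of 1 is 0, in particular 1 ∉ fbelow F 0
  have hone1 : (1 : R) ∉ fbelow F 0 := by
    obtain ⟨γ1, h1, h2⟩ := hsep 1 one_ne_zero
    have hm : (1 : R) ∈ F (γ1 + γ1) := by simpa using hmul h1 h1
    have hn : (1 : R) ∉ fbelow F (γ1 + γ1) := by
      have := hdom h1 h2 h1 h2
      simpa using this
    have e1 : γ1 + γ1 ≤ γ1 := degle hm hn h1
    have e2 : γ1 ≤ γ1 + γ1 := degle h1 h2 hm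
    have : γ1 + γ1 = γ1 := le_antisymm e1 e2
    have hγ0 : γ1 = 0 := by
      have := congrArg (fun t => t - γ1) this
      simpa using this
    rw [hγ0] at h2
    exact h2
  -- inverse witness
  have inv_w : ∀ {x : R} {γ : Γ}, x ≠ 0 → x ∈ F γ → x ∉ fbelow F γ →
      x⁻¹ ∈ F (-γ) ∧ x⁻¹ ∉ fbelow F (-γ) := by
    intro x γ hx h1 h2
    obtain ⟨δ, hd1, hd2⟩ := hsep x⁻¹ (inv_ne_zero hx)
    have hm : (1 : R) ∈ F (γ + δ) := by
      have := hmul h1 hd1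
      rwa [mul_inv_cancel₀ hx] at this
    have hn : (1 : R) ∉ fbelow F (γ + δ) := by
      have := hdom h1 h2 hd1 hd2
      rwa [mul_inv_cancel₀ hx] at this
    have e1 : γ + δ ≤ 0 := degle hm hn hone
    have e2 : (0 : Γ) ≤ γ + δ := degle hone hone1 hm
    have hδ : δ = -γ := by
      have h0 : γ + δ = 0 := le_antisymm e1 e2
      rw [add_eq_zero_iff_neg_eq] at h0
      exact h0.symm
    rw [hδ] at hd1 hd2
    exact ⟨hd1, hd2⟩
  refine ⟨?_, ?_, ?_, ?_, hone1, ?_⟩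
  · -- invariance under inner automorphisms
    intro u x hu hx
    by_cases hx0 : x = 0
    · simp [hx0, AddSubgroup.zero_mem]
    obtain ⟨γ, hg1, hg2⟩ := hsep x hx0
    have hγ0 : γ ≤ 0 := degle hg1 hg2 hx
    obtain ⟨δ, hd1, hd2⟩ := hsep u hu
    obtain ⟨hi1, _⟩ := inv_w hu hd1 hd2
    have : u * x * u⁻¹ ∈ F (δ + γ + -δ) := hmul (hmul hd1 hg1) hi1
    have heq : δ + γ + -δ = γ := by abel
    rw [heq] at this
    exact hmono hγ0 this
  · -- x or x⁻¹ in F 0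
    intro x hx
    obtain ⟨γ, hg1, hg2⟩ := hsep x hx
    rcases le_total γ 0 with h | h
    · exact Or.inl (hmono h hg1)
    · obtain ⟨hi1, _⟩ := inv_w hx hg1 hg2
      exact Or.inr (hmono (neg_nonpos.mpr h) hi1)
  · -- fbelow F 0 ≤ F 0
    exact iSup₂_le fun γ' h' => hmono (le_of_lt h')
  · -- ideal property
    intro x hx y hy
    by_cases hx0 : x = 0
    · constructor <;> simp [hx0, AddSubgroup.zero_mem]
    obtain ⟨γ', hγ', hxγ'⟩ := fb_mem hx0 hx
    constructor
    · have : x * y ∈ F (γ' + 0) := hmul hxγ' hy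
      exact mem_fb (by simpa using hγ') this
    · have : y * x ∈ F (0 + γ') := hmul hy hxγ'
      exact mem_fb (by simpa using hγ') this
  · -- units
    intro x hx hnx
    have hx0 : x ≠ 0 := by
      rintro rfl
      exact hnx (AddSubgroup.zero_mem _)
    obtain ⟨γ, hg1, hg2⟩ := hsep x hx0
    have hγle : γ ≤ 0 := degle hg1 hg2 hx
    have hγ0 : γ = 0 := by
      rcases lt_or_eq_of_le hγle with h | h
      · exact absurd (mem_fb h hg1) hnx
      · exact h
    obtain ⟨hi1, _⟩ := inv_w hx0 hg1 hg2
    rw [hγ0, neg_zero] at hi1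
    exact ⟨x⁻¹, hi1, mul_inv_cancel₀ hx0, inv_mul_cancel₀ hx0⟩
end

section
/- Let A be a K-algebra containing the field K, O_v ⊆ K a valuation ring, and Λ ⊆ A a subring with Λ ∩ K = O_v and K·Λ = A. Define F_γ^v A = (f_γ^v K)·Λ where f_γ^v K = {x ∈ K : v(x) ≥ −γ}. Then F_γ^v A ∩ K = f_γ^v K for every γ in the value group Γ. -/
/-- The additive subgroup `(f_γ^vK)·S` of a `K`-algebra `A` generated by products `c·s`
with `c ∈ f_γ^vK = {c ∈ K : v c ≥ -γ}` and `s ∈ S`. -/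
def scaledSet {K : Type*} (A : Type*) {Γ : Type*} [Field K] [Ring A] [Algebra K A]
    [AddCommGroup Γ] [LinearOrder Γ] [IsOrderedAddMonoid Γ] (v : K → WithTop Γ) (γ : Γ) (S : Set A) : AddSubgroup A :=
  AddSubgroup.closure {a | ∃ c : K, ∃ s ∈ S, ((-γ : Γ) : WithTop Γ) ≤ v c ∧
    a = algebraMap K A c * s}

/-- Let `v : K → Γ ∪ {∞}` be a surjective valuation on the field `K`, `A` a `K`-algebra and
`Λ ⊆ A` a subring with `Λ ∩ K = O_v` and `K·Λ = A`.  Then for every `γ ∈ Γ`,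
`F_γ^vA ∩ K = f_γ^vK`, where `F_γ^vA = (f_γ^vK)·Λ`. -/
theorem stmt13 {K A Γ : Type*} [Field K] [Ring A] [Algebra K A]
    [AddCommGroup Γ] [LinearOrder Γ] [IsOrderedAddMonoid Γ]
    (v : K → WithTop Γ)
    (h0 : ∀ x : K, v x = ⊤ ↔ x = 0)
    (hmul : ∀ x y : K, v (x * y) = v x + v y)
    (hadd : ∀ x y : K, min (v x) (v y) ≤ v (x + y))
    (hsurj : ∀ γ : Γ, ∃ x : K, v x = (γ : WithTop Γ))
    (Λ : Subring A)
    (hΛK : ∀ x : K, algebraMap K A x ∈ Λ ↔ (0 : WithTop Γ) ≤ v x)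
    (hKΛ : Submodule.span K (Λ : Set A) = ⊤) :
    ∀ (γ : Γ) (x : K),
      algebraMap K A x ∈ scaledSet A v γ (Λ : Set A) ↔ ((-γ : Γ) : WithTop Γ) ≤ v x := by
  have hv1 : v 1 = 0 := by
    have h := hmul 1 1
    rw [mul_one] at h
    rcases ht : v 1 with _ | a
    · exact absurd ((h0 1).mp ht) one_ne_zero
    · rw [ht] at h
      have h' : (a : WithTop Γ) = (a : WithTop Γ) + (a : WithTop Γ) := h
      have h2 : a = a + a := by exact_mod_cast h'
      have ha : a = 0 :=
        (add_left_cancel (a := a) (b := (0 : Γ)) (c := a) (by rw [add_zero, ← h2])).symm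
      rw [ha]
      rfl
  intro γ x
  constructor
  · intro hx
    obtain ⟨π, hπ⟩ := hsurj γ
    have key : ∀ y ∈ scaledSet A v γ (Λ : Set A), algebraMap K A π * y ∈ Λ := by
      intro y hy
      induction hy using AddSubgroup.closure_induction with
      | mem a ha =>
        obtain ⟨c, s, hs, hvc, rfl⟩ := ha
        have heq : algebraMap K A π * (algebraMap K A c * s)
            = algebraMap K A (π * c) * s := by
          rw [map_mul, mul_assoc]
        rw [heq]
        refine Λ.mul_mem ((hΛK _).mpr ?_) hs
        rw [hmul, hπ]
        calc (0 : WithTop Γ) = (γ : WithTop Γ) + ((-γ : Γ) : WithTop Γ) := by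
              rw [← WithTop.coe_add, add_neg_cancel, WithTop.coe_zero]
          _ ≤ (γ : WithTop Γ) + v c := add_le_add_right hvc _
      | zero => rw [mul_zero]; exact Λ.zero_mem
      | add a b _ _ ha hb => rw [mul_add]; exact Λ.add_mem ha hb
      | neg a _ ha => rw [mul_neg]; exact Λ.neg_mem ha
    have hmem : algebraMap K A (π * x) ∈ Λ := by
      rw [map_mul]; exact key _ hx
    have hge : (0 : WithTop Γ) ≤ v (π * x) := (hΛK _).mp hmem
    rw [hmul, hπ] at hge
    rcases ht : v x with _ | a
    · exact le_top
    · rw [ht] at hge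
      have hge0 : (0 : WithTop Γ) ≤ (γ : WithTop Γ) + (a : WithTop Γ) := hge
      have hge' : (0 : Γ) ≤ γ + a := by exact_mod_cast hge0
      have h3 := add_le_add_right hge' (-γ)
      rw [add_zero, neg_add_cancel_left] at h3
      show ((-γ : Γ) : WithTop Γ) ≤ (a : WithTop Γ)
      exact_mod_cast h3
  · intro hvx
    exact AddSubgroup.subset_closure
      ⟨x, 1, Λ.one_mem, hvx, by rw [mul_one]⟩
end

section
/- Let K be a field with surjective valuation v : K → Γ ∪ {∞}, Λ a subring of a K-algebra A, and suppose Λ ∩ F is a submodule such that for n ∈ ℕ the sets F_nA form a filtration of A with Λ ∩ F_nA an O_v-lattice in F_nA. Then for all γ ∈ Γ and all n ∈ ℕ: (f_γ^v K)Λ ∩ F_nA = (f_γ^v K)(Λ ∩ F_nA). -/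
/-- Let `v : K → Γ ∪ {∞}` be a surjective valuation, `A` a `K`-algebra with an exhaustive
`ℕ`-filtration `F_nA` by `K`-subspaces with `K ⊆ F_0A`, and `Λ ⊆ A` a subring with
`Λ ∩ K = O_v` such that `Λ ∩ F_nA` is an `O_v`-lattice in `F_nA` for all `n` (an
`F`-reductor).  Then `(f_γ^vK)Λ ∩ F_nA = (f_γ^vK)(Λ ∩ F_nA)` for all `γ ∈ Γ`, `n ∈ ℕ`. -/
theorem stmt14 {K A Γ : Type*} [Field K] [Ring A] [Algebra K A]
    [AddCommGroup Γ] [LinearOrder Γ] [IsOrderedAddMonoid Γ]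
    (v : K → WithTop Γ)
    (h0 : ∀ x : K, v x = ⊤ ↔ x = 0)
    (hmul : ∀ x y : K, v (x * y) = v x + v y)
    (hadd : ∀ x y : K, min (v x) (v y) ≤ v (x + y))
    (hsurj : ∀ γ : Γ, ∃ x : K, v x = (γ : WithTop Γ))
    (F : ℕ → Submodule K A)
    (hFmono : Monotone F)
    (hFexh : ∀ a : A, ∃ n : ℕ, a ∈ F n)
    (hFmul : ∀ {m n : ℕ} {a b : A}, a ∈ F m → b ∈ F n → a * b ∈ F (m + n))
    (hFK : ∀ x : K, algebraMap K A x ∈ F 0)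
    (Λ : Subring A)
    (hΛK : ∀ x : K, algebraMap K A x ∈ Λ ↔ (0 : WithTop Γ) ≤ v x)
    (hlat : ∀ n : ℕ,
      (∃ s : Set A, s ⊆ (Λ : Set A) ∩ (F n : Set A) ∧
        LinearIndependent K ((↑) : s → A) ∧ Submodule.span K s = F n) ∧
      (∃ t : Finset A, (↑t : Set A) ⊆ (F n : Set A) ∧
        (Λ : Set A) ∩ (F n : Set A) ⊆ (scaledSet A v 0 (↑t : Set A) : Set A))) :
    ∀ (γ : Γ) (n : ℕ),
      (scaledSet A v γ (Λ : Set A) : Set A) ∩ (F n : Set A) =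
        (scaledSet A v γ ((Λ : Set A) ∩ (F n : Set A)) : Set A) := by
  intro γ n
  obtain ⟨d, hd⟩ := hsurj (-γ)
  have hd0 : d ≠ 0 := by
    intro h
    rw [h, (h0 0).mpr rfl] at hd
    exact WithTop.coe_ne_top hd.symm
  have hv1 : v 1 = 0 := by
    have h := hmul 1 1
    rw [one_mul] at h
    have h1 : v 1 ≠ ⊤ := by simp [h0]
    obtain ⟨g, hg⟩ := WithTop.ne_top_iff_exists.mp h1
    rw [← hg, ← WithTop.coe_add, WithTop.coe_inj] at h
    have hg0 : g = 0 := by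
      have : g + g = g + 0 := by rw [add_zero, ← h]
      exact (add_left_cancel this)
    rw [← hg, hg0]; rfl
  have hdinv : v d⁻¹ = (γ : WithTop Γ) := by
    have h := hmul d d⁻¹
    rw [mul_inv_cancel₀ hd0, hv1, hd] at h
    have h1 : v d⁻¹ ≠ ⊤ := by simp [h0, hd0]
    obtain ⟨g, hg⟩ := WithTop.ne_top_iff_exists.mp h1
    rw [← hg, ← WithTop.coe_add] at h
    have h2 : -γ + g = 0 := by exact_mod_cast h.symm
    rw [← hg, WithTop.coe_inj]
    exact (neg_add_eq_zero.mp h2).symm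
  -- key: for x in scaledSet γ Λ, d⁻¹ • x ∈ Λ
  have key : ∀ x ∈ scaledSet A v γ (Λ : Set A), algebraMap K A d⁻¹ * x ∈ Λ := by
    intro x hx
    refine AddSubgroup.closure_induction (fun a ha => ?_) ?_ (fun a b _ _ iha ihb => ?_)
      (fun a _ iha => ?_) hx
    · obtain ⟨c, s, hs, hvc, rfl⟩ := ha
      rw [← mul_assoc, ← map_mul]
      refine Subring.mul_mem _ ((hΛK _).mpr ?_) hs
      rw [hmul, hdinv]
      calc (0 : WithTop Γ) = (γ : WithTop Γ) + ((-γ : Γ) : WithTop Γ) := by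
            rw [← WithTop.coe_add, add_neg_cancel]; rfl
        _ ≤ (γ : WithTop Γ) + v c := add_le_add_right hvc _
    · rw [mul_zero]; exact Subring.zero_mem _
    · rw [mul_add]; exact Subring.add_mem _ iha ihb
    · rw [mul_neg]; exact Subring.neg_mem _ iha
  ext x
  simp only [Set.mem_inter_iff]
  constructor
  · rintro ⟨hx1, hx2⟩
    have hΛmem : algebraMap K A d⁻¹ * x ∈ Λ := key x hx1
    have hFmem : algebraMap K A d⁻¹ * x ∈ F n := by
      rw [← Algebra.smul_def]; exact Submodule.smul_mem _ _ hx2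
    have hxeq : x = algebraMap K A d * (algebraMap K A d⁻¹ * x) := by
      rw [← mul_assoc, ← map_mul, mul_inv_cancel₀ hd0, map_one, one_mul]
    rw [hxeq]
    exact AddSubgroup.subset_closure ⟨d, _, ⟨hΛmem, hFmem⟩, le_of_eq hd.symm, rfl⟩
  · intro hx
    constructor
    · refine AddSubgroup.closure_mono ?_ hx
      rintro a ⟨c, s, hs, hvc, rfl⟩
      exact ⟨c, s, hs.1, hvc, rfl⟩
    · refine AddSubgroup.closure_induction (fun a ha => ?_) ?_ (fun a b _ _ iha ihb => ?_)
        (fun a _ iha => ?_) hx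
      · obtain ⟨c, s, hs, hvc, rfl⟩ := ha
        rw [← Algebra.smul_def]
        exact Submodule.smul_mem _ _ hs.2
      · exact Submodule.zero_mem _
      · exact Submodule.add_mem _ iha ihb
      · exact Submodule.neg_mem _ iha
end

section
/- Let A be a filtered K-algebra with a finite positive filtration FA and Λ ⊆ A an F-reductor. Then m_v(Λ ∩ F_nA) = m_vΛ ∩ F_nA for all n ∈ ℕ, where m_v is the maximal ideal of the valuation ring O_v = Λ ∩ K. -/
/-- The additive subgroup `m_v·S` generated by products `c·s` with `c ∈ m_v = {c : v c > 0}`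
(the maximal ideal of the valuation ring `O_v` of `v`) and `s ∈ S`. -/
def mvScaledSet {K : Type*} (A : Type*) {Γ : Type*} [Field K] [Ring A] [Algebra K A]
    [AddCommGroup Γ] [LinearOrder Γ] [IsOrderedAddMonoid Γ] (v : K → WithTop Γ) (S : Set A) : AddSubgroup A :=
  AddSubgroup.closure {a | ∃ c : K, ∃ s ∈ S, (0 : WithTop Γ) < v c ∧
    a = algebraMap K A c * s}

/-- Every element of `m_v·S` is of the form `d·y` with `v d > 0` and `y ∈ S`, provided `S`
is an additive subgroup closed under multiplication by elements of `O_v`. -/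
lemma mvScaledSet_rep {K A Γ : Type*} [Field K] [Ring A] [Algebra K A]
    [AddCommGroup Γ] [LinearOrder Γ] [IsOrderedAddMonoid Γ]
    (v : K → WithTop Γ)
    (h0 : ∀ x : K, v x = ⊤ ↔ x = 0)
    (hmul : ∀ x y : K, v (x * y) = v x + v y)
    (S : Set A) (hS0 : (0 : A) ∈ S)
    (hSadd : ∀ a ∈ S, ∀ b ∈ S, a + b ∈ S)
    (hSneg : ∀ a ∈ S, -a ∈ S)
    (hSsmul : ∀ c : K, (0 : WithTop Γ) ≤ v c → ∀ s ∈ S, algebraMap K A c * s ∈ S)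
    {x : A} (hx : x ∈ mvScaledSet A v S) :
    ∃ d : K, (0 : WithTop Γ) < v d ∧ ∃ y ∈ S, x = algebraMap K A d * y := by
  induction hx using AddSubgroup.closure_induction with
  | mem a ha =>
    obtain ⟨c, s, hs, hc, rfl⟩ := ha
    exact ⟨c, hc, s, hs, rfl⟩
  | zero =>
    refine ⟨0, ?_, 0, hS0, by simp⟩
    simp [(h0 0).mpr rfl]
  | add a b ha hb iha ihb =>
    obtain ⟨d, hd, y, hy, rfl⟩ := iha
    obtain ⟨d', hd', y', hy', rfl⟩ := ihb
    by_cases hd0 : d = 0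
    · refine ⟨d', hd', y', hy', ?_⟩
      simp [hd0]
    by_cases hd'0 : d' = 0
    · refine ⟨d, hd, y, hy, ?_⟩
      simp [hd'0]
    -- both nonzero; take the one with smaller valuation
    obtain ⟨γ, hγ⟩ := WithTop.ne_top_iff_exists.mp ((h0 d).not.mpr hd0)
    obtain ⟨γ', hγ'⟩ := WithTop.ne_top_iff_exists.mp ((h0 d').not.mpr hd'0)
    rcases le_total (v d) (v d') with hle | hle
    · have hc : (0 : WithTop Γ) ≤ v (d' / d) := by
        have h1 : v d' = v d + v (d' / d) := by
          rw [← hmul]; congr 1; field_simp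
        rcases eq_or_ne (v (d' / d)) ⊤ with ht | ht
        · simp [ht]
        obtain ⟨δ, hδ⟩ := WithTop.ne_top_iff_exists.mp ht
        have h2 : (γ' : WithTop Γ) = (γ : WithTop Γ) + (δ : WithTop Γ) := by
          rw [hγ', h1, hγ, hδ]
        have h3 : γ' = γ + δ := by exact_mod_cast h2
        rw [← hγ, ← hγ'] at hle
        have h4 : γ ≤ γ' := by exact_mod_cast hle
        have h5 : (0 : Γ) ≤ δ := (le_add_iff_nonneg_right _).mp (h3 ▸ h4)
        rw [← hδ]; exact_mod_cast h5
      refine ⟨d, hd, y + algebraMap K A (d' / d) * y',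
        hSadd _ hy _ (hSsmul _ hc _ hy'), ?_⟩
      have hdd : d * (d' / d) = d' := by field_simp
      rw [mul_add, ← mul_assoc, ← map_mul, hdd]
    · have hc : (0 : WithTop Γ) ≤ v (d / d') := by
        have h1 : v d = v d' + v (d / d') := by
          rw [← hmul]; congr 1; field_simp
        rcases eq_or_ne (v (d / d')) ⊤ with ht | ht
        · simp [ht]
        obtain ⟨δ, hδ⟩ := WithTop.ne_top_iff_exists.mp ht
        have h2 : (γ : WithTop Γ) = (γ' : WithTop Γ) + (δ : WithTop Γ) := by
          rw [hγ, h1, hγ', hδ]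
        have h3 : γ = γ' + δ := by exact_mod_cast h2
        rw [← hγ, ← hγ'] at hle
        have h4 : γ' ≤ γ := by exact_mod_cast hle
        have h5 : (0 : Γ) ≤ δ := (le_add_iff_nonneg_right _).mp (h3 ▸ h4)
        rw [← hδ]; exact_mod_cast h5
      refine ⟨d', hd', algebraMap K A (d / d') * y + y',
        hSadd _ (hSsmul _ hc _ hy) _ hy', ?_⟩
      have hdd : d' * (d / d') = d := by field_simp
      rw [mul_add, ← mul_assoc, ← map_mul, hdd]
  | neg a ha iha =>
    obtain ⟨d, hd, y, hy, rfl⟩ := iha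
    exact ⟨d, hd, -y, hSneg _ hy, (mul_neg _ _).symm⟩

/-- Let `A` be a `K`-algebra with a finite positive filtration `FA` and `Λ ⊆ A` an
`F`-reductor.  Then `m_v(Λ ∩ F_nA) = m_vΛ ∩ F_nA` for all `n ∈ ℕ`. -/
theorem stmt15 {K A Γ : Type*} [Field K] [Ring A] [Algebra K A]
    [AddCommGroup Γ] [LinearOrder Γ] [IsOrderedAddMonoid Γ]
    (v : K → WithTop Γ)
    (h0 : ∀ x : K, v x = ⊤ ↔ x = 0)
    (hmul : ∀ x y : K, v (x * y) = v x + v y)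
    (hadd : ∀ x y : K, min (v x) (v y) ≤ v (x + y))
    (hsurj : ∀ γ : Γ, ∃ x : K, v x = (γ : WithTop Γ))
    (F : ℕ → Submodule K A)
    (hFmono : Monotone F)
    (hFexh : ∀ a : A, ∃ n : ℕ, a ∈ F n)
    (hFmul : ∀ {m n : ℕ} {a b : A}, a ∈ F m → b ∈ F n → a * b ∈ F (m + n))
    (hFK : ∀ x : K, algebraMap K A x ∈ F 0)
    (hFfin : ∀ n : ℕ, FiniteDimensional K (F n))
    (Λ : Subring A)
    (hΛK : ∀ x : K, algebraMap K A x ∈ Λ ↔ (0 : WithTop Γ) ≤ v x)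
    (hlat : ∀ n : ℕ,
      (∃ s : Set A, s ⊆ (Λ : Set A) ∩ (F n : Set A) ∧
        LinearIndependent K ((↑) : s → A) ∧ Submodule.span K s = F n) ∧
      (∃ t : Finset A, (↑t : Set A) ⊆ (F n : Set A) ∧
        (Λ : Set A) ∩ (F n : Set A) ⊆ (scaledSet A v 0 (↑t : Set A) : Set A))) :
    ∀ n : ℕ,
      (mvScaledSet A v ((Λ : Set A) ∩ (F n : Set A)) : Set A) =
        (mvScaledSet A v (Λ : Set A) : Set A) ∩ (F n : Set A) := by
  intro n
  apply Set.Subset.antisymm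
  · -- ⊆ : generators land in mvΛ ∩ F n, which is an additive subgroup
    have key : mvScaledSet A v ((Λ : Set A) ∩ (F n : Set A)) ≤
        (mvScaledSet A v (Λ : Set A)) ⊓ (F n).toAddSubgroup := by
      rw [mvScaledSet, AddSubgroup.closure_le]
      rintro a ⟨c, s, ⟨hsΛ, hsF⟩, hc, rfl⟩
      constructor
      · exact AddSubgroup.subset_closure ⟨c, s, hsΛ, hc, rfl⟩
      · show algebraMap K A c * s ∈ F n
        rw [← Algebra.smul_def]
        exact (F n).smul_mem c hsF
    intro x hx
    exact key hx
  · -- ⊇ : use the representation x = d·y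
    rintro x ⟨hx1, hx2⟩
    have hrep := mvScaledSet_rep v h0 hmul (Λ : Set A) Λ.zero_mem
      (fun a ha b hb => Λ.add_mem ha hb) (fun a ha => Λ.neg_mem ha)
      (fun c hc s hs => Λ.mul_mem ((hΛK c).mpr hc) hs) hx1
    obtain ⟨d, hd, y, hy, rfl⟩ := hrep
    by_cases hd0 : d = 0
    · simp only [hd0, map_zero, zero_mul]
      exact (mvScaledSet A v _).zero_mem
    · have hyF : y ∈ F n := by
        have : algebraMap K A d * y = d • y := (Algebra.smul_def d y).symm
        rw [this] at hx2
        have := (F n).smul_mem d⁻¹ hx2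
        rwa [← smul_assoc, smul_eq_mul, inv_mul_cancel₀ hd0, one_smul] at this
      exact AddSubgroup.subset_closure ⟨d, y, ⟨hy, hyF⟩, hd, rfl⟩
end
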